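/- arXiv:1402.0196 — 2 statements merged into one kernel-verified Lean document; each statement's English description precedes it below -/
import Mathlib

section
/- Let S be a tree of order n_S with a graceful labeling f such that f(u) = n_S - 1 for a vertex u of S, and let T be a tree with a graceful labeling g such that g(v) = 0 for a vertex v of T. Then the tree S Δ_{+1} T, obtained by replacing every vertex of S other than u with a copy of T identified at the vertex corresponding to v, admits a graceful labeling. -/
open SimpleGraph

/-- The weight of an edge under a vertex labeling: `|f u - f v|`. -/
def edgeWt {V : Type*} (f : V → ℕ) : Sym2 V → ℕ :=
  Sym2.lift ⟨fun u v => ((f u : ℤ) - f v).natAbs, fun u v => by simp only []; omega⟩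

/-- `f` is a graceful labeling of `G`: injective into `{0,...,m}` with induced
edge weights exactly `{1,...,m}`, where `m` is the number of edges. -/
def IsGracefulLabeling {V : Type*} (G : SimpleGraph V) (f : V → ℕ) : Prop :=
  Function.Injective f ∧ (∀ v, f v ≤ G.edgeSet.ncard) ∧
    (edgeWt f) '' G.edgeSet = Set.Icc 1 G.edgeSet.ncard

/-- `G` admits a graceful labeling. -/
def IsGraceful {V : Type*} (G : SimpleGraph V) : Prop :=
  ∃ f : V → ℕ, IsGracefulLabeling G f

/-- `p` is a longest path in `G`. -/
def IsLongestPath {V : Type*} (G : SimpleGraph V) {u v : V} (p : G.Walk u v) : Prop :=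
  p.IsPath ∧ ∀ (w x : V) (q : G.Walk w x), q.IsPath → q.length ≤ p.length

/-- `G` is a tree all of whose vertices are within distance `k` of some longest path.
`k = 1` gives caterpillars, `k = 2` gives lobsters. -/
def IsKDistantTree {V : Type*} (G : SimpleGraph V) (k : ℕ) : Prop :=
  G.IsTree ∧ ∃ (u v : V) (p : G.Walk u v), IsLongestPath G p ∧
    ∀ a : V, ∃ b ∈ p.support, G.dist a b ≤ k

/-- `G` is a lobster shell: a lobster with a longest path `P` such that every vertex not
on `P` having a neighbor on `P` has degree exactly `2`. -/
def IsLobsterShell {V : Type*} (G : SimpleGraph V) : Prop :=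
  G.IsTree ∧ ∃ (u v : V) (p : G.Walk u v), IsLongestPath G p ∧
    (∀ a : V, ∃ b ∈ p.support, G.dist a b ≤ 2) ∧
    (∀ a : V, a ∉ p.support → (∃ b ∈ p.support, G.Adj a b) → (G.neighborSet a).ncard = 2)

/-- `f` is a bipartite labeling of `G`. -/
def IsBipartiteLabeling {V : Type*} (G : SimpleGraph V) (f : V → ℕ) : Prop :=
  Function.Injective f ∧ (∀ v, f v ≤ G.edgeSet.ncard) ∧
    ∃ c : ℤ, ∀ u v : V, G.Adj u v →
      ((f u : ℤ) ≤ c ∧ c < (f v : ℤ)) ∨ ((f v : ℤ) ≤ c ∧ c < (f u : ℤ))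

/-- The number of distinct edge weights induced by `f` on `G`. -/
noncomputable def distinctWeightCount {V : Type*} (G : SimpleGraph V) (f : V → ℕ) : ℕ :=
  ((edgeWt f) '' G.edgeSet).ncard

/-- The tree `S Δ₊₁ T`: every vertex of `S` other than the distinguished vertex `u` is
replaced by a copy of `T`, identified at the vertex corresponding to `v`. The vertex
`Sum.inr ()` plays the role of `u`; `Sum.inl (x, s)` is the vertex `s` in the copy of `T`
substituted for the vertex `x ≠ u` of `S` (with `Sum.inl (x, v)` the identified vertex). -/
def deltaPlusOne {VS VT : Type*} (S : SimpleGraph VS) (T : SimpleGraph VT)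
    (u : VS) (v : VT) : SimpleGraph (({x : VS // x ≠ u} × VT) ⊕ Unit) :=
  SimpleGraph.fromRel (fun a b =>
    match a, b with
    | Sum.inl ⟨x, s⟩, Sum.inl ⟨y, t⟩ =>
        (x = y ∧ T.Adj s t) ∨ (S.Adj x.1 y.1 ∧ s = v ∧ t = v)
    | Sum.inl ⟨x, s⟩, Sum.inr _ => S.Adj x.1 u ∧ s = v
    | _, _ => False)

lemma key_ne (n K D : ℤ) (hD : D ≠ 0) (hD2 : |D| < n) : n * K + D ≠ 0 := by
  have hn : 0 < n := lt_of_le_of_lt (abs_nonneg D) hD2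
  have h2 := abs_lt.mp hD2
  intro h
  rcases lt_trichotomy K 0 with hK | rfl | hK
  · have : K ≤ -1 := by omega
    nlinarith
  · omega
  · have : 1 ≤ K := by omega
    nlinarith

lemma key_ndvd (n K D : ℤ) (hD : D ≠ 0) (hD2 : |D| < n) : ¬ (n ∣ (n * K + D)) := by
  intro h
  have hn : 0 < n := lt_of_le_of_lt (abs_nonneg D) hD2
  have h1 : n ∣ D := (dvd_add_right (Dvd.intro K rfl)).mp h
  have := Int.le_of_dvd (abs_pos.mpr hD) ((dvd_abs n D).mpr h1)
  omega

lemma key_eq (n K D K' D' : ℤ) (hD : D ≠ 0) (hD2 : |D| < n) (hD' : D' ≠ 0) (hD2' : |D'| < n)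
    (hpar : (K - K') % 2 = 0) (h : |n * K + D| = |n * K' + D'|) :
    (K = K' ∧ D = D') ∨ (K = -K' ∧ D = -D') := by
  have hn : 0 < n := lt_of_le_of_lt (abs_nonneg D) hD2
  have h2 := abs_lt.mp hD2
  have h2' := abs_lt.mp hD2'
  rcases abs_eq_abs.mp h with h | h
  · left
    have h3 : n * (K - K') = D' - D := by ring_nf; linarith
    have h4 : |K - K'| < 2 := by
      by_contra h4
      push_neg at h4
      have h5 : |n * (K - K')| = |D' - D| := by rw [h3]
      rw [abs_mul, abs_of_pos hn] at h5
      have h8 : |D' - D| < 2 * n := abs_lt.mpr ⟨by omega, by omega⟩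
      nlinarith
    have h5 := abs_lt.mp h4
    have h6 : K - K' = 0 := by omega
    constructor
    · omega
    · have : n * (K - K') = 0 := by rw [h6, mul_zero]
      omega
  · right
    have h3 : n * (K + K') = -(D' + D) := by ring_nf; linarith
    have h4 : |K + K'| < 2 := by
      by_contra h4
      push_neg at h4
      have h5 : |n * (K + K')| = |D' + D| := by rw [h3, abs_neg]
      rw [abs_mul, abs_of_pos hn] at h5
      have h8 : |D' + D| < 2 * n := abs_lt.mpr ⟨by omega, by omega⟩
      nlinarith
    have h5 := abs_lt.mp h4
    have hpar2 : (K + K') % 2 = 0 := by omega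
    have h6 : K + K' = 0 := by omega
    constructor
    · omega
    · have : n * (K + K') = 0 := by rw [h6, mul_zero]
      omega

lemma div_unique_aux (n a b r s : ℕ) (hr : r < n) (hs : s < n) (h : n * a + r = n * b + s) :
    a = b ∧ r = s := by
  have hn : 0 < n := by omega
  have h1 : (n * a + r) / n = a := by
    rw [Nat.mul_add_div hn, Nat.div_eq_of_lt hr, add_zero]
  have h2 : (n * b + s) / n = b := by
    rw [Nat.mul_add_div hn, Nat.div_eq_of_lt hs, add_zero]
  have : a = b := by rw [← h1, ← h2, h]
  subst this
  omega

lemma exists_two_coloring {V : Type*} (G : SimpleGraph V) (hG : G.IsTree) (v : V) :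
    ∃ ε : V → ℕ, ε v = 0 ∧ (∀ x, ε x ≤ 1) ∧ ∀ s t, G.Adj s t → ε s ≠ ε t := by
  classical
  have hup := hG.existsUnique_path v
  choose P hP hPu using hup
  refine ⟨fun s => (P s).length % 2, ?_, fun x => Nat.lt_succ_iff.mp (Nat.mod_lt _ (by norm_num)), ?_⟩
  · have h0 : (Walk.nil : G.Walk v v) = P v := hPu v Walk.nil Walk.IsPath.nil
    simp only [← h0, Walk.length_nil]
  · intro s t h hc
    simp only at hc
    have key : (P t).length = (P s).length + 1 ∨ (P s).length = (P t).length + 1 := by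
      by_cases ht : t ∈ (P s).support
      · right
        have h1 : ((P s).takeUntil t ht) = P t := hPu t _ ((hP s).takeUntil ht)
        have h3 : (Walk.cons h.symm Walk.nil : G.Walk t s).IsPath := by
          apply Walk.IsPath.nil.cons
          simp [h.ne']
        have h4 : (P s).dropUntil t ht = Walk.cons h.symm Walk.nil :=
          (hG.existsUnique_path t s).unique ((hP s).dropUntil ht) h3
        have h5 := congrArg Walk.length ((P s).take_spec ht)
        rw [Walk.length_append, h1, h4] at h5
        simp only [Walk.length_cons, Walk.length_nil] at h5
        omega
      · left
        have h1 : ((P s).concat h).IsPath := by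
          rw [← Walk.isPath_reverse_iff, Walk.reverse_concat]
          apply ((hP s).reverse).cons
          rwa [Walk.support_reverse, List.mem_reverse]
        have h2 : (P s).concat h = P t := hPu t _ h1
        rw [← h2, Walk.length_concat]
    omega

theorem stmt11 {VS VT : Type} [Fintype VS] [Fintype VT]
    (S : SimpleGraph VS) (T : SimpleGraph VT) (u : VS) (v : VT)
    (hS : S.IsTree) (hT : T.IsTree) (f : VS → ℕ) (g : VT → ℕ)
    (hf : IsGracefulLabeling S f) (hg : IsGracefulLabeling T g)
    (hfu : f u = Nat.card VS - 1) (hgv : g v = 0) :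
    IsGraceful (deltaPlusOne S T u v) := by
  classical
  obtain ⟨hfinj, hfle, hfim⟩ := hf
  obtain ⟨hginj, hgle, hgim⟩ := hg
  obtain ⟨ε, hεv, hεle, hεadj⟩ := exists_two_coloring T hT v
  set mS := S.edgeSet.ncard with hmS
  set mT := T.edgeSet.ncard with hmT
  set nT := mT + 1 with hnTdef
  set M := mS * nT with hMdef
  set Δ := deltaPlusOne S T u v with hΔ
  have edgecard : ∀ (V' : Type) (_ : Fintype V') (G : SimpleGraph V'), G.IsTree →
      G.edgeSet.ncard + 1 = Fintype.card V' := by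
    intro V' hfin G hG
    letI : Fintype G.edgeSet := (Set.toFinite _).fintype
    have h1 := hG.card_edgeFinset
    rwa [edgeFinset, ← Set.ncard_eq_toFinset_card'] at h1
  have hcardS : mS + 1 = Fintype.card VS := edgecard VS _ S hS
  have hcardT : mT + 1 = Fintype.card VT := edgecard VT _ T hT
  have hfu2 : f u = mS := by
    rw [hfu, Nat.card_eq_fintype_card, ← hcardS]
    omega
  have hfx : ∀ x : VS, x ≠ u → f x < mS := fun x hx =>
    lt_of_le_of_ne (hfle x) fun hc => hx (hfinj (hc.trans hfu2.symm))
  have fsurj : ∀ a, a ≤ mS → ∃ x, f x = a := by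
    intro a ha
    have h1 : (Finset.univ.image f) = Finset.range (mS + 1) := by
      apply Finset.eq_of_subset_of_card_le
      · intro b hb
        simp only [Finset.mem_image] at hb
        obtain ⟨x, _, rfl⟩ := hb
        simp only [Finset.mem_range]
        exact Nat.lt_succ_of_le (hfle x)
      · rw [Finset.card_range, Finset.card_image_of_injective _ hfinj, Finset.card_univ, ← hcardS]
    have h2 : a ∈ Finset.univ.image f := by
      rw [h1, Finset.mem_range]
      omega
    simp only [Finset.mem_image] at h2
    obtain ⟨x, _, hx⟩ := h2
    exact ⟨x, hx⟩
  have wS : ∀ x y, S.Adj x y → edgeWt f s(x, y) ∈ Set.Icc 1 mS := by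
    intro x y hxy
    rw [← hfim]
    exact ⟨s(x, y), (S.mem_edgeSet).mpr hxy, rfl⟩
  have wT : ∀ s t, T.Adj s t → edgeWt g s(s, t) ∈ Set.Icc 1 mT := by
    intro s t hst
    rw [← hgim]
    exact ⟨s(s, t), (T.mem_edgeSet).mpr hst, rfl⟩
  have ncard_Icc : ∀ m : ℕ, (Set.Icc 1 m).ncard = m := by
    intro m
    rw [← Finset.coe_Icc, Set.ncard_coe_finset, Nat.card_Icc]
    omega
  have injS : Set.InjOn (edgeWt f) S.edgeSet :=
    Set.injOn_of_ncard_image_eq (by rw [hfim, ncard_Icc]) (Set.toFinite _)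
  have injT : Set.InjOn (edgeWt g) T.edgeSet :=
    Set.injOn_of_ncard_image_eq (by rw [hgim, ncard_Icc]) (Set.toFinite _)
  -- the labeling
  set c : {x : VS // x ≠ u} × VT → ℕ :=
    fun p => if ε p.2 = 0 then f p.1.1 else mS - 1 - f p.1.1 with hcdef
  set h : ({x : VS // x ≠ u} × VT) ⊕ Unit → ℕ :=
    (fun z => Sum.elim (fun p => nT * c p + g p.2) (fun _ => nT * mS) z) with hhdef
  have hmS1 : ∀ _x : {x : VS // x ≠ u}, 1 ≤ mS := fun x => by
    have := hfx x.1 x.2; omega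
  have hcp : ∀ p : {x : VS // x ≠ u} × VT, c p ≤ mS - 1 := by
    intro p
    have := hfx p.1.1 p.1.2
    show (if ε p.2 = 0 then f p.1.1 else mS - 1 - f p.1.1) ≤ mS - 1
    split <;> omega
  have hhl : ∀ p, h (Sum.inl p) = nT * c p + g p.2 := fun p => rfl
  have hhr : ∀ y : Unit, h (Sum.inr y) = nT * mS := fun _ => rfl
  have hmul1 : 1 ≤ mS → nT * (mS - 1) + nT = nT * mS := by
    intro h1
    have h2 : mS - 1 + 1 = mS := by omega
    calc nT * (mS - 1) + nT = nT * (mS - 1 + 1) := by ring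
      _ = nT * mS := by rw [h2]
  have hhle : ∀ p, h (Sum.inl p) < nT * mS := by
    intro p
    rw [hhl]
    have h1 : nT * c p ≤ nT * (mS - 1) := Nat.mul_le_mul_left _ (hcp p)
    have h2 : g p.2 ≤ mT := hgle p.2
    have h3 := hmul1 (hmS1 p.1)
    omega
  have hcast : ∀ (x : {x : VS // x ≠ u}) (s : VT),
      (h (Sum.inl (x, s)) : ℤ) =
        nT * (if ε s = 0 then (f x.1 : ℤ) else (mS : ℤ) - 1 - f x.1) + g s := by
    intro x s
    have hx := hfx x.1 x.2
    rw [hhl]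
    have hc1 : c (x, s) = if ε s = 0 then f x.1 else mS - 1 - f x.1 := rfl
    rw [hc1]
    by_cases hs : ε s = 0
    · rw [if_pos hs, if_pos hs]
      push_cast
      ring
    · rw [if_neg hs, if_neg hs]
      have hsub : ((mS - 1 - f x.1 : ℕ) : ℤ) = (mS : ℤ) - 1 - f x.1 := by omega
      push_cast [hsub]
      ring
  -- weight formulas
  have wtCopy : ∀ (x : {x : VS // x ≠ u}) (s t : VT), ε s ≠ 0 → ε t = 0 →
      (edgeWt h s(Sum.inl (x, s), Sum.inl (x, t)) : ℤ) =
        |(nT : ℤ) * ((mS : ℤ) - 1 - 2 * f x.1) + ((g s : ℤ) - g t)| := by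
    intro x s t hs ht0
    have e1 : edgeWt h s(Sum.inl (x, s), Sum.inl (x, t)) =
        ((h (Sum.inl (x, s)) : ℤ) - h (Sum.inl (x, t))).natAbs := rfl
    rw [e1, Int.natCast_natAbs, hcast, hcast, if_neg hs, if_pos ht0]
    congr 1
    ring
  have wtRoot : ∀ (x y : {x : VS // x ≠ u}),
      edgeWt h s(Sum.inl (x, v), Sum.inl (y, v)) = nT * edgeWt f s(x.1, y.1) := by
    intro x y
    have e1 : edgeWt h s(Sum.inl (x, v), Sum.inl (y, v)) =
        ((h (Sum.inl (x, v)) : ℤ) - h (Sum.inl (y, v))).natAbs := rfl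
    have e2 : edgeWt f s(x.1, y.1) = ((f x.1 : ℤ) - f y.1).natAbs := rfl
    rw [e1, e2, hcast, hcast, if_pos hεv, if_pos hεv, hgv]
    have e3 : (nT : ℤ) * (f x.1 : ℤ) + ((0 : ℕ) : ℤ) - ((nT : ℤ) * (f y.1 : ℤ) + ((0 : ℕ) : ℤ))
        = (nT : ℤ) * ((f x.1 : ℤ) - f y.1) := by push_cast; ring
    rw [e3, Int.natAbs_mul]
    simp
  have wtU : ∀ (x : {x : VS // x ≠ u}),
      edgeWt h s(Sum.inl (x, v), Sum.inr ()) = nT * edgeWt f s(x.1, u) := by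
    intro x
    have e1 : edgeWt h s(Sum.inl (x, v), Sum.inr ()) =
        ((h (Sum.inl (x, v)) : ℤ) - h (Sum.inr ())).natAbs := rfl
    have e2 : edgeWt f s(x.1, u) = ((f x.1 : ℤ) - f u).natAbs := rfl
    rw [e1, e2, hcast, if_pos hεv, hgv, hfu2, hhr]
    have e3 : (nT : ℤ) * (f x.1 : ℤ) + ((0 : ℕ) : ℤ) - ((nT * mS : ℕ) : ℤ)
        = (nT : ℤ) * ((f x.1 : ℤ) - mS) := by push_cast; ring
    rw [e3, Int.natAbs_mul]
    simp
  -- adjacency normalization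
  have hadjΔ : ∀ z1 z2 : ({x : VS // x ≠ u} × VT) ⊕ Unit, Δ.Adj z1 z2 →
      (∃ (x : {x : VS // x ≠ u}) (s t : VT), T.Adj s t ∧ ε s ≠ 0 ∧ ε t = 0 ∧
        s(z1, z2) = s(Sum.inl (x, s), Sum.inl (x, t)))
      ∨ (∃ x y : {x : VS // x ≠ u}, S.Adj x.1 y.1 ∧
        s(z1, z2) = s(Sum.inl (x, v), Sum.inl (y, v)))
      ∨ (∃ x : {x : VS // x ≠ u}, S.Adj x.1 u ∧ s(z1, z2) = s(Sum.inl (x, v), Sum.inr ())) := by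
    intro z1 z2 hz
    have horient : ∀ (x : {x : VS // x ≠ u}) (s t : VT), T.Adj s t →
        ∃ s' t', T.Adj s' t' ∧ ε s' ≠ 0 ∧ ε t' = 0 ∧
          s((Sum.inl (x, s) : ({x : VS // x ≠ u} × VT) ⊕ Unit), Sum.inl (x, t)) =
            s((Sum.inl (x, s') : ({x : VS // x ≠ u} × VT) ⊕ Unit), Sum.inl (x, t')) := by
      intro x s t hst
      by_cases hs : ε s = 0
      · exact ⟨t, s, hst.symm, fun h0 => hεadj s t hst (by omega), hs, Sym2.eq_swap⟩
      · have ht : ε t = 0 := by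
          have h1 := hεadj s t hst
          have h2 := hεle s
          have h3 := hεle t
          omega
        exact ⟨s, t, hst, hs, ht, rfl⟩
    rw [hΔ] at hz
    simp only [deltaPlusOne, fromRel_adj] at hz
    obtain ⟨hne, hr⟩ := hz
    rcases z1 with ⟨x1, s1⟩ | u1 <;> rcases z2 with ⟨x2, s2⟩ | u2
    · simp only at hr
      rcases hr with (⟨heq, hTadj⟩ | ⟨hSadj, rfl, rfl⟩) | (⟨heq, hTadj⟩ | ⟨hSadj, rfl, rfl⟩)
      · subst heq
        obtain ⟨s', t', h1, h2, h3, h4⟩ := horient x1 s1 s2 hTadj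
        exact Or.inl ⟨x1, s', t', h1, h2, h3, h4⟩
      · exact Or.inr (Or.inl ⟨x1, x2, hSadj, rfl⟩)
      · subst heq
        obtain ⟨s', t', h1, h2, h3, h4⟩ := horient x2 s1 s2 hTadj.symm
        exact Or.inl ⟨x2, s', t', h1, h2, h3, h4⟩
      · exact Or.inr (Or.inl ⟨x1, x2, hSadj.symm, rfl⟩)
    · simp only at hr
      rcases hr with ⟨hSadj, rfl⟩ | hfalse
      · exact Or.inr (Or.inr ⟨x1, hSadj, rfl⟩)
      · exact absurd hfalse (by simp)
    · simp only at hr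
      rcases hr with hfalse | ⟨hSadj, rfl⟩
      · exact absurd hfalse (by simp)
      · exact Or.inr (Or.inr ⟨x2, hSadj, Sym2.eq_swap⟩)
    · simp only at hr
      rcases hr with hfalse | hfalse <;> exact absurd hfalse (by simp)
  -- basic weight bounds for copy edges
  have DT : ∀ s t : VT, T.Adj s t → ((g s : ℤ) - g t ≠ 0 ∧ |(g s : ℤ) - g t| < nT) := by
    intro s t hst
    obtain ⟨h1, h2⟩ := wT s t hst
    have h3 : edgeWt g s(s, t) = ((g s : ℤ) - g t).natAbs := rfl
    rw [h3] at h1 h2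
    constructor
    · omega
    · rw [Int.abs_eq_natAbs]
      omega
  have KB : ∀ x : {x : VS // x ≠ u}, |(mS : ℤ) - 1 - 2 * f x.1| ≤ (mS : ℤ) - 1 := by
    intro x
    have := hfx x.1 x.2
    rw [abs_le]
    omega
  have wtCopyBounds : ∀ (x : {x : VS // x ≠ u}) (s t : VT), T.Adj s t → ε s ≠ 0 → ε t = 0 →
      1 ≤ edgeWt h s(Sum.inl (x, s), Sum.inl (x, t)) ∧
        edgeWt h s(Sum.inl (x, s), Sum.inl (x, t)) ≤ M := by
    intro x s t hst hs ht0
    obtain ⟨hD1, hD2⟩ := DT s t hst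
    have hK := KB x
    have hw := wtCopy x s t hs ht0
    have hnT1 : (1 : ℤ) ≤ (nT : ℤ) := by exact_mod_cast Nat.one_le_iff_ne_zero.mpr (by omega)
    constructor
    · by_contra h0
      push_neg at h0
      have h1 : edgeWt h s(Sum.inl (x, s), Sum.inl (x, t)) = 0 := by omega
      rw [h1] at hw
      exact key_ne (nT : ℤ) _ _ hD1 hD2 (abs_eq_zero.mp (by exact_mod_cast hw.symm))
    · have h1 : |(nT : ℤ) * ((mS : ℤ) - 1 - 2 * f x.1) + ((g s : ℤ) - g t)|
          ≤ (nT : ℤ) * ((mS : ℤ) - 1) + mT := by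
        calc |(nT : ℤ) * ((mS : ℤ) - 1 - 2 * f x.1) + ((g s : ℤ) - g t)|
            ≤ |(nT : ℤ) * ((mS : ℤ) - 1 - 2 * f x.1)| + |(g s : ℤ) - g t| := abs_add_le _ _
          _ = (nT : ℤ) * |(mS : ℤ) - 1 - 2 * f x.1| + |(g s : ℤ) - g t| := by
              rw [abs_mul, abs_of_nonneg (by omega : (0 : ℤ) ≤ (nT : ℤ))]
          _ ≤ (nT : ℤ) * ((mS : ℤ) - 1) + mT := by
              have h2 : (nT : ℤ) * |(mS : ℤ) - 1 - 2 * f x.1| ≤ (nT : ℤ) * ((mS : ℤ) - 1) :=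
                mul_le_mul_of_nonneg_left hK (by omega)
              have h3 : |(g s : ℤ) - g t| ≤ (mT : ℤ) := by
                have := hnTdef
                omega
              omega
      have h2 : (nT : ℤ) * ((mS : ℤ) - 1) + mT = (M : ℤ) - 1 := by
        have hMc : (M : ℤ) = (mS : ℤ) * nT := by exact_mod_cast congrArg Nat.cast hMdef
        have hnTc : (nT : ℤ) = (mT : ℤ) + 1 := by exact_mod_cast congrArg Nat.cast hnTdef
        rw [hMc, hnTc]
        ring
      rw [h2] at h1
      have h3 : ((edgeWt h s(Sum.inl (x, s), Sum.inl (x, t)) : ℕ) : ℤ) ≤ (M : ℤ) - 1 := by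
        rw [hw]
        exact h1
      omega
  -- image of weights is Icc 1 M
  have himage : edgeWt h '' Δ.edgeSet = Set.Icc 1 M := by
    have hnT0 : 0 < nT := by omega
    apply Set.Subset.antisymm
    · rintro w ⟨e, he, rfl⟩
      induction e using Sym2.ind with
      | _ z1 z2 =>
        rw [mem_edgeSet] at he
        rcases hadjΔ z1 z2 he with ⟨x, s, t, hst, hs, ht0, heq⟩ | ⟨x, y, hxy, heq⟩ | ⟨x, hxu, heq⟩
        · rw [heq]
          exact wtCopyBounds x s t hst hs ht0
        · rw [heq, wtRoot]
          obtain ⟨h1, h2⟩ := wS x.1 y.1 hxy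
          constructor
          · have h3 := Nat.mul_le_mul (show 1 ≤ nT by omega) h1
            omega
          · calc nT * edgeWt f s(x.1, y.1) ≤ nT * mS := Nat.mul_le_mul_left _ h2
              _ = M := by rw [hMdef, mul_comm]
        · rw [heq, wtU]
          obtain ⟨h1, h2⟩ := wS x.1 u hxu
          constructor
          · have h3 := Nat.mul_le_mul (show 1 ≤ nT by omega) h1
            omega
          · calc nT * edgeWt f s(x.1, u) ≤ nT * mS := Nat.mul_le_mul_left _ h2
              _ = M := by rw [hMdef, mul_comm]
    · rintro w ⟨hw1, hw2⟩
      have hmS1' : 1 ≤ mS := by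
        by_contra h0
        have h1 : mS = 0 := by omega
        have h2 : M = 0 := by rw [hMdef, h1, zero_mul]
        omega
      by_cases hdvd : w % nT = 0
      · obtain ⟨q, hq⟩ := Nat.dvd_of_mod_eq_zero hdvd
        have hq1 : 1 ≤ q := by
          rcases Nat.eq_zero_or_pos q with h0 | h0
          · rw [h0, mul_zero] at hq
            omega
          · exact h0
        have hq2 : q ≤ mS := by
          by_contra h0
          push_neg at h0
          have h1 : nT * (mS + 1) ≤ nT * q := Nat.mul_le_mul_left _ (by omega)
          have h2 : M = nT * mS := by rw [hMdef, mul_comm]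
          have h3 : nT * (mS + 1) = nT * mS + nT := by ring
          omega
        have hqm : q ∈ Set.Icc 1 mS := ⟨hq1, hq2⟩
        rw [← hfim] at hqm
        obtain ⟨e, hee, hwe⟩ := hqm
        revert hee hwe
        induction e using Sym2.ind with
        | _ a b =>
          intro hee hwe
          have hab : S.Adj a b := (S.mem_edgeSet).mp hee
          by_cases hbu : b = u
          · rw [hbu] at hab hwe
            have hau : a ≠ u := hab.ne
            refine ⟨s(Sum.inl (⟨a, hau⟩, v), Sum.inr ()), ?_, ?_⟩
            · rw [mem_edgeSet, hΔ]
              simp only [deltaPlusOne, fromRel_adj]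
              exact ⟨by simp, Or.inl ⟨hab, trivial⟩⟩
            · rw [wtU, hwe, ← hq]
          · by_cases hau : a = u
            · rw [hau] at hab hwe
              refine ⟨s(Sum.inl (⟨b, hbu⟩, v), Sum.inr ()), ?_, ?_⟩
              · rw [mem_edgeSet, hΔ]
                simp only [deltaPlusOne, fromRel_adj]
                exact ⟨by simp, Or.inl ⟨hab.symm, trivial⟩⟩
              · rw [wtU]
                have hswap : s((b : VS), u) = s(u, b) := Sym2.eq_swap
                rw [hswap, hwe, ← hq]
            · refine ⟨s(Sum.inl (⟨a, hau⟩, v), Sum.inl (⟨b, hbu⟩, v)), ?_, ?_⟩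
              · rw [mem_edgeSet, hΔ]
                simp only [deltaPlusOne, fromRel_adj]
                refine ⟨?_, Or.inl (Or.inr ⟨hab, trivial, trivial⟩)⟩
                simp only [ne_eq, Sum.inl.injEq, Prod.mk.injEq, Subtype.mk.injEq, not_and]
                intro h0
                exact absurd h0 hab.ne
              · rw [wtRoot, hwe, ← hq]
      · set q := w / nT with hqdef
        set r := w % nT with hrdef
        have hr1 : 1 ≤ r := Nat.one_le_iff_ne_zero.mpr hdvd
        have hr2 : r < nT := Nat.mod_lt _ hnT0
        have hqr : nT * q + r = w := Nat.div_add_mod w nT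
        have hq2 : q + 1 ≤ mS := by
          by_contra h0
          push_neg at h0
          have h1 : nT * mS ≤ nT * q := Nat.mul_le_mul_left _ (by omega)
          have h2 : M = nT * mS := by rw [hMdef, mul_comm]
          omega
        obtain ⟨K, j, D0, hKw, hjD, hj1, hjm, hKpar, hKle⟩ :
            ∃ (K j : ℕ) (D0 : ℤ), (nT : ℤ) * K + D0 = w ∧ |D0| = j ∧ 1 ≤ j ∧ j ≤ mT ∧
              ((mS : ℤ) - 1 - K) % 2 = 0 ∧ (K : ℤ) ≤ (mS : ℤ) - 1 := by
          by_cases hpar : (q + mS + 1) % 2 = 0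
          · refine ⟨q, r, (r : ℤ), ?_, ?_, hr1, by omega, by omega, by omega⟩
            · exact_mod_cast hqr
            · rw [abs_of_nonneg (by positivity)]
          · refine ⟨q + 1, nT - r, (r : ℤ) - nT, ?_, ?_, by omega, by omega, by omega, by omega⟩
            · have hc : ((nT * q + r : ℕ) : ℤ) = (w : ℤ) := by exact_mod_cast hqr
              push_cast at hc ⊢
              linarith
            · rw [abs_of_nonpos (by omega)]
              omega
        have hjm2 : j ∈ Set.Icc 1 mT := ⟨hj1, hjm⟩
        rw [← hgim] at hjm2
        obtain ⟨e, hee, hwe⟩ := hjm2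
        revert hee hwe
        induction e using Sym2.ind with
        | _ s0 t0 =>
          intro hee hwe
          have hst : T.Adj s0 t0 := (T.mem_edgeSet).mp hee
          have hwe' : ((g s0 : ℤ) - g t0).natAbs = j := by
            have h5 : edgeWt g s(s0, t0) = ((g s0 : ℤ) - g t0).natAbs := rfl
            rw [h5] at hwe
            exact hwe
          obtain ⟨s, t, hst', hs, ht0, hD⟩ :
              ∃ s t, T.Adj s t ∧ ε s ≠ 0 ∧ ε t = 0 ∧ ((g s : ℤ) - g t).natAbs = j := by
            by_cases hes : ε s0 = 0
            · have het : ε t0 ≠ 0 := fun h0 => hεadj s0 t0 hst (by omega)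
              refine ⟨t0, s0, hst.symm, het, hes, ?_⟩
              omega
            · have het : ε t0 = 0 := by
                have h1 := hεadj s0 t0 hst
                have h2 := hεle s0
                have h3 := hεle t0
                omega
              exact ⟨s0, t0, hst, hes, het, hwe'⟩
          have hDe : (g s : ℤ) - g t = D0 ∨ (g s : ℤ) - g t = -D0 := by
            have h1 : |(g s : ℤ) - g t| = |D0| := by
              rw [hjD, Int.abs_eq_natAbs, hD]
            exact abs_eq_abs.mp h1
          have hKa : ∃ Ka : ℤ, |(nT : ℤ) * Ka + ((g s : ℤ) - g t)| = w ∧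
              ((mS : ℤ) - 1 - Ka) % 2 = 0 ∧ |Ka| ≤ (mS : ℤ) - 1 := by
            rcases hDe with hh | hh
            · refine ⟨(K : ℤ), ?_, hKpar, ?_⟩
              · rw [hh, hKw, abs_of_nonneg (by positivity)]
              · rw [abs_of_nonneg (by positivity)]
                omega
            · refine ⟨-(K : ℤ), ?_, by omega, ?_⟩
              · rw [hh]
                have h6 : (nT : ℤ) * (-(K : ℤ)) + -D0 = -((nT : ℤ) * K + D0) := by ring
                rw [h6, abs_neg, hKw, abs_of_nonneg (by positivity)]
              · rw [abs_neg, abs_of_nonneg (by positivity)]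
                omega
          obtain ⟨Ka, hKa1, hKa2, hKa3⟩ := hKa
          obtain ⟨A, hA⟩ := Int.dvd_of_emod_eq_zero hKa2
          have hA0 : 0 ≤ A ∧ A ≤ (mS : ℤ) - 1 := by
            have := abs_le.mp hKa3
            omega
          obtain ⟨xv, hxv⟩ := fsurj A.toNat (by omega)
          have hxu : xv ≠ u := by
            intro h0
            rw [h0, hfu2] at hxv
            omega
          refine ⟨s(Sum.inl (⟨xv, hxu⟩, s), Sum.inl (⟨xv, hxu⟩, t)), ?_, ?_⟩
          · rw [mem_edgeSet, hΔ]
            simp only [deltaPlusOne, fromRel_adj]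
            refine ⟨?_, Or.inl (Or.inl ⟨trivial, hst'⟩)⟩
            simp [hst'.ne]
          · have hw := wtCopy ⟨xv, hxu⟩ s t hs ht0
            have hfeq : ((mS : ℤ) - 1 - 2 * f xv) = Ka := by
              rw [hxv]
              omega
            rw [hfeq, hKa1] at hw
            exact_mod_cast hw
  -- weight map is injective on edges
  have hinjW : Set.InjOn (edgeWt h) Δ.edgeSet := by
    have hnT0 : 0 < nT := by omega
    have hcontra : ∀ (x1 : {x : VS // x ≠ u}) (s1 t1 : VT), T.Adj s1 t1 → ε s1 ≠ 0 → ε t1 = 0 →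
        ∀ m : ℕ, edgeWt h s(Sum.inl (x1, s1), Sum.inl (x1, t1)) = nT * m → False := by
      intro x1 s1 t1 hst1 hs1 ht1 m hw12
      obtain ⟨hD1ne, hD1lt⟩ := DT s1 t1 hst1
      have hw1 := wtCopy x1 s1 t1 hs1 ht1
      have h1 : ((nT * m : ℕ) : ℤ) =
          |(nT : ℤ) * ((mS : ℤ) - 1 - 2 * f x1.1) + ((g s1 : ℤ) - g t1)| := by
        rw [← hw1]
        exact_mod_cast hw12.symm
      have h2 : (nT : ℤ) ∣ |(nT : ℤ) * ((mS : ℤ) - 1 - 2 * f x1.1) + ((g s1 : ℤ) - g t1)| := by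
        rw [← h1]
        exact ⟨(m : ℤ), by push_cast; ring⟩
      exact key_ndvd _ _ _ hD1ne hD1lt ((dvd_abs _ _).mp h2)
    intro e1 he1 e2 he2 hw12
    induction e1 using Sym2.ind with
    | _ z1 z2 =>
      induction e2 using Sym2.ind with
      | _ z3 z4 =>
        rw [mem_edgeSet] at he1 he2
        rcases hadjΔ z1 z2 he1 with ⟨x1, s1, t1, hst1, hs1, ht1, heq1⟩ |
            ⟨x1, y1, hxy1, heq1⟩ | ⟨x1, hxu1, heq1⟩ <;>
          rcases hadjΔ z3 z4 he2 with ⟨x2, s2, t2, hst2, hs2, ht2, heq2⟩ |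
            ⟨x2, y2, hxy2, heq2⟩ | ⟨x2, hxu2, heq2⟩ <;>
          rw [heq1, heq2] at hw12 ⊢
        · -- copy copy
          obtain ⟨hD1ne, hD1lt⟩ := DT s1 t1 hst1
          obtain ⟨hD2ne, hD2lt⟩ := DT s2 t2 hst2
          have hw1 := wtCopy x1 s1 t1 hs1 ht1
          have hw2 := wtCopy x2 s2 t2 hs2 ht2
          have habs : |(nT : ℤ) * ((mS : ℤ) - 1 - 2 * f x1.1) + ((g s1 : ℤ) - g t1)| =
              |(nT : ℤ) * ((mS : ℤ) - 1 - 2 * f x2.1) + ((g s2 : ℤ) - g t2)| := by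
            rw [← hw1, ← hw2]
            exact_mod_cast hw12
          have hf1 := hfx x1.1 x1.2
          have hf2 := hfx x2.1 x2.2
          have hpar : (((mS : ℤ) - 1 - 2 * f x1.1) - ((mS : ℤ) - 1 - 2 * f x2.1)) % 2 = 0 := by
            omega
          rcases key_eq _ _ _ _ _ hD1ne hD1lt hD2ne hD2lt hpar habs with ⟨hK, hD⟩ | ⟨hK, hD⟩
          · have hx12 : x1 = x2 := Subtype.ext (hfinj (show f x1.1 = f x2.1 by omega))
            have hedge : s(s1, t1) = s(s2, t2) := by
              apply injT ((T.mem_edgeSet).mpr hst1) ((T.mem_edgeSet).mpr hst2)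
              show ((g s1 : ℤ) - g t1).natAbs = ((g s2 : ℤ) - g t2).natAbs
              omega
            rcases Sym2.eq_iff.mp hedge with ⟨h9, h10⟩ | ⟨h9, h10⟩
            · rw [hx12, h9, h10]
            · rw [h9] at hs1
              exact absurd ht2 hs1
          · have hedge : s(s1, t1) = s(s2, t2) := by
              apply injT ((T.mem_edgeSet).mpr hst1) ((T.mem_edgeSet).mpr hst2)
              show ((g s1 : ℤ) - g t1).natAbs = ((g s2 : ℤ) - g t2).natAbs
              omega
            rcases Sym2.eq_iff.mp hedge with ⟨h9, h10⟩ | ⟨h9, h10⟩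
            · rw [h9, h10] at hD
              omega
            · rw [h9] at hs1
              exact absurd ht2 hs1
        · exact absurd (hw12.trans (wtRoot x2 y2)) (fun hc => hcontra x1 s1 t1 hst1 hs1 ht1 _ hc)
        · exact absurd (hw12.trans (wtU x2)) (fun hc => hcontra x1 s1 t1 hst1 hs1 ht1 _ hc)
        · exact absurd (hw12.symm.trans (wtRoot x1 y1))
            (fun hc => hcontra x2 s2 t2 hst2 hs2 ht2 _ hc)
        · -- root root
          rw [wtRoot, wtRoot] at hw12
          have h1 : edgeWt f s(x1.1, y1.1) = edgeWt f s(x2.1, y2.1) :=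
            Nat.eq_of_mul_eq_mul_left hnT0 hw12
          have hedge := injS ((S.mem_edgeSet).mpr hxy1) ((S.mem_edgeSet).mpr hxy2) h1
          rcases Sym2.eq_iff.mp hedge with ⟨h9, h10⟩ | ⟨h9, h10⟩
          · rw [Subtype.ext h9, Subtype.ext h10]
          · rw [show x1 = y2 from Subtype.ext h9, show y1 = x2 from Subtype.ext h10]
            exact Sym2.eq_swap
        · -- root u
          rw [wtRoot, wtU] at hw12
          have h1 : edgeWt f s(x1.1, y1.1) = edgeWt f s(x2.1, u) :=
            Nat.eq_of_mul_eq_mul_left hnT0 hw12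
          have hedge := injS ((S.mem_edgeSet).mpr hxy1) ((S.mem_edgeSet).mpr hxu2) h1
          rcases Sym2.eq_iff.mp hedge with ⟨h9, h10⟩ | ⟨h9, h10⟩
          · exact absurd h10 y1.2
          · exact absurd h9 x1.2
        · exact absurd (hw12.symm.trans (wtU x1)) (fun hc => hcontra x2 s2 t2 hst2 hs2 ht2 _ hc)
        · -- u root
          rw [wtU, wtRoot] at hw12
          have h1 : edgeWt f s(x1.1, u) = edgeWt f s(x2.1, y2.1) :=
            Nat.eq_of_mul_eq_mul_left hnT0 hw12
          have hedge := injS ((S.mem_edgeSet).mpr hxu1) ((S.mem_edgeSet).mpr hxy2) h1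
          rcases Sym2.eq_iff.mp hedge with ⟨h9, h10⟩ | ⟨h9, h10⟩
          · exact absurd h10.symm y2.2
          · exact absurd h10.symm x2.2
        · -- u u
          rw [wtU, wtU] at hw12
          have h1 : edgeWt f s(x1.1, u) = edgeWt f s(x2.1, u) :=
            Nat.eq_of_mul_eq_mul_left hnT0 hw12
          have hedge := injS ((S.mem_edgeSet).mpr hxu1) ((S.mem_edgeSet).mpr hxu2) h1
          rcases Sym2.eq_iff.mp hedge with ⟨h9, h10⟩ | ⟨h9, h10⟩
          · rw [Subtype.ext h9]
          · exact absurd h9 x1.2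
  have hcount : Δ.edgeSet.ncard = M := by
    have h1 := Set.ncard_image_of_injOn hinjW
    rw [himage, ncard_Icc] at h1
    omega
  -- injectivity of labels
  have hinj : Function.Injective h := by
    intro z1 z2 hz
    rcases z1 with p1 | u1 <;> rcases z2 with p2 | u2
    · rw [hhl, hhl] at hz
      have hg1 : g p1.2 < nT := by have := hgle p1.2; omega
      have hg2 : g p2.2 < nT := by have := hgle p2.2; omega
      obtain ⟨hc12, hg12⟩ := div_unique_aux nT (c p1) (c p2) (g p1.2) (g p2.2) hg1 hg2 hz
      have hs12 : p1.2 = p2.2 := hginj hg12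
      have hx12 : p1.1 = p2.1 := by
        have hf1 := hfx p1.1.1 p1.1.2
        have hf2 := hfx p2.1.1 p2.1.2
        have hcc1 : c p1 = if ε p1.2 = 0 then f p1.1.1 else mS - 1 - f p1.1.1 := rfl
        have hcc2 : c p2 = if ε p2.2 = 0 then f p2.1.1 else mS - 1 - f p2.1.1 := rfl
        rw [hcc1, hcc2, hs12] at hc12
        have hff : f p1.1.1 = f p2.1.1 := by
          by_cases hep : ε p2.2 = 0
          · rwa [if_pos hep, if_pos hep] at hc12
          · rw [if_neg hep, if_neg hep] at hc12
            omega
        exact Subtype.ext (hfinj hff)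
      obtain ⟨q1, q2⟩ := p1
      obtain ⟨q3, q4⟩ := p2
      simp only at hs12 hx12
      rw [hs12, hx12]
    · exact absurd hz (by rw [hhr]; exact Nat.ne_of_lt (hhle p1))
    · exact absurd hz.symm (by rw [hhr]; exact Nat.ne_of_lt (hhle p2))
    · cases u1; cases u2; rfl
  refine ⟨h, hinj, ?_, ?_⟩
  · intro z
    rw [hcount]
    rcases z with p | y
    · exact le_of_lt (lt_of_lt_of_le (hhle p) (le_of_eq (mul_comm nT mS)))
    · rw [hhr]
      exact le_of_eq (mul_comm nT mS)
  · rw [hcount]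
    exact himage
end

section
/- Let T_1 and T_2 be vertex-disjoint trees with distinguished vertices u_1 ∈ V(T_1) and u_2 ∈ V(T_2), and suppose there are bipartite labelings f_1 of T_1 and f_2 of T_2 with f_1(u_1) = f_2(u_2) = 0. Then the amalgamation T_1 ∘ T_2 obtained by identifying u_1 with u_2 admits a bipartite labeling f with at least ε(f_1) + ε(f_2) distinct edge weights; consequently α(T_1 ∘ T_2) ≥ ε(f_1) + ε(f_2). -/
open SimpleGraph

/-- The amalgamation `T₁ ∘ T₂`, obtained by identifying `u₁ ∈ V(T₁)` with `u₂ ∈ V(T₂)`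
(the vertex `Sum.inl u₁` plays the role of the identified vertex). -/
def amalgam {V₁ V₂ : Type*} (T₁ : SimpleGraph V₁) (T₂ : SimpleGraph V₂)
    (u₁ : V₁) (u₂ : V₂) : SimpleGraph (V₁ ⊕ {v : V₂ // v ≠ u₂}) :=
  SimpleGraph.fromRel (fun a b =>
    match a, b with
    | Sum.inl x, Sum.inl y => T₁.Adj x y
    | Sum.inl x, Sum.inr y => x = u₁ ∧ T₂.Adj u₂ y.1
    | Sum.inr x, Sum.inr y => T₂.Adj x.1 y.1
    | _, _ => False)

theorem stmt12 {V₁ V₂ : Type} [Fintype V₁] [Fintype V₂]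
    (T₁ : SimpleGraph V₁) (T₂ : SimpleGraph V₂) (u₁ : V₁) (u₂ : V₂)
    (h₁ : T₁.IsTree) (h₂ : T₂.IsTree) (f₁ : V₁ → ℕ) (f₂ : V₂ → ℕ)
    (hf₁ : IsBipartiteLabeling T₁ f₁) (hf₂ : IsBipartiteLabeling T₂ f₂)
    (hu₁ : f₁ u₁ = 0) (hu₂ : f₂ u₂ = 0) :
    ∃ f : V₁ ⊕ {v : V₂ // v ≠ u₂} → ℕ,
      IsBipartiteLabeling (amalgam T₁ T₂ u₁ u₂) f ∧
      distinctWeightCount T₁ f₁ + distinctWeightCount T₂ f₂ ≤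
        distinctWeightCount (amalgam T₁ T₂ u₁ u₂) f := by
  classical
  obtain ⟨hinj₁, hle₁, c₁, hcut₁⟩ := hf₁
  obtain ⟨hinj₂, hle₂, c₂, hcut₂⟩ := hf₂
  set m₁ := T₁.edgeSet.ncard with hm₁
  set m₂ := T₂.edgeSet.ncard with hm₂
  set d₁ := min c₁.toNat m₁ with hd₁
  set d₂ := min c₂.toNat m₂ with hd₂
  have hd₁m : d₁ ≤ m₁ := min_le_right _ _
  have hd₂m : d₂ ≤ m₂ := min_le_right _ _
  have hc₁ : ∀ x y, T₁.Adj x y → (f₁ x ≤ d₁ ∧ d₁ < f₁ y) ∨ (f₁ y ≤ d₁ ∧ d₁ < f₁ x) := by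
    intro x y hxy
    have hx := hle₁ x; have hy := hle₁ y
    rcases hcut₁ x y hxy with ⟨ha, hb⟩ | ⟨ha, hb⟩
    · left; omega
    · right; omega
  have hc₂ : ∀ v w, T₂.Adj v w → (f₂ v ≤ d₂ ∧ d₂ < f₂ w) ∨ (f₂ w ≤ d₂ ∧ d₂ < f₂ v) := by
    intro v w hvw
    have hv := hle₂ v; have hw := hle₂ w
    rcases hcut₂ v w hvw with ⟨ha, hb⟩ | ⟨ha, hb⟩
    · left; omega
    · right; omega
  have hb2pos : ∀ v : V₂, v ≠ u₂ → 1 ≤ f₂ v := by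
    intro v hv
    have := hinj₂.ne hv
    rw [hu₂] at this
    omega
  -- the embedding of V₂ into the amalgam's vertex set
  let ι : V₂ → V₁ ⊕ {v : V₂ // v ≠ u₂} :=
    fun v => if h : v = u₂ then Sum.inl u₁ else Sum.inr ⟨v, h⟩
  have hιinj : Function.Injective ι := by
    intro v w h
    by_cases hv : v = u₂ <;> by_cases hw : w = u₂
    · rw [hv, hw]
    · simp [ι, hv, hw] at h
    · simp [ι, hv, hw] at h
    · simpa [ι, hv, hw] using h
  -- the labeling
  let g : V₁ ⊕ {v : V₂ // v ≠ u₂} → ℕ :=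
    Sum.elim (fun x => if f₁ x ≤ d₁ then d₁ - f₁ x else m₁ + m₂ + d₁ + 1 - f₁ x)
      (fun v => f₂ v.1 + d₁)
  have hgl : ∀ x, g (Sum.inl x) =
      if f₁ x ≤ d₁ then d₁ - f₁ x else m₁ + m₂ + d₁ + 1 - f₁ x := fun _ => rfl
  have hgr : ∀ v, g (Sum.inr v) = f₂ v.1 + d₁ := fun _ => rfl
  have hgι : ∀ v, g (ι v) = f₂ v + d₁ := by
    intro v
    by_cases hv : v = u₂
    · subst hv; simp [ι, g, hu₁, hu₂]
    · simp [ι, hv, g]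
  -- injectivity of g
  have hginj : Function.Injective g := by
    rintro (x | v) (y | w) h
    · rw [hgl, hgl] at h
      have hx := hle₁ x; have hy := hle₁ y
      have : f₁ x = f₁ y := by split_ifs at h <;> omega
      rw [hinj₁ this]
    · rw [hgl, hgr] at h
      have hx := hle₁ x; have hw := hle₂ w.1; have hw1 := hb2pos w.1 w.2
      exfalso; split_ifs at h <;> omega
    · rw [hgr, hgl] at h
      have hy := hle₁ y; have hv := hle₂ v.1; have hv1 := hb2pos v.1 v.2
      exfalso; split_ifs at h <;> omega
    · rw [hgr, hgr] at h
      have : f₂ v.1 = f₂ w.1 := by omega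
      exact congrArg Sum.inr (Subtype.ext (hinj₂ this))
  -- label bound
  have hgle : ∀ a, g a ≤ m₁ + m₂ := by
    rintro (x | v)
    · rw [hgl]; have := hle₁ x; split_ifs <;> omega
    · rw [hgr]; have := hle₂ v.1; omega
  -- edges of the amalgam coming from T₁ and T₂
  have hmapl : ∀ e ∈ T₁.edgeSet, Sym2.map Sum.inl e ∈ (amalgam T₁ T₂ u₁ u₂).edgeSet := by
    intro e he
    revert he
    induction e using Sym2.ind with
    | _ x y =>
      intro he
      rw [SimpleGraph.mem_edgeSet] at he
      rw [Sym2.map_pair_eq, SimpleGraph.mem_edgeSet]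
      simp [amalgam, SimpleGraph.fromRel_adj]
      exact ⟨he.ne, Or.inl he⟩
  have hmapr : ∀ e ∈ T₂.edgeSet, Sym2.map ι e ∈ (amalgam T₁ T₂ u₁ u₂).edgeSet := by
    intro e he
    revert he
    induction e using Sym2.ind with
    | _ v w =>
      intro he
      rw [SimpleGraph.mem_edgeSet] at he
      rw [Sym2.map_pair_eq, SimpleGraph.mem_edgeSet]
      by_cases hv : v = u₂ <;> by_cases hw : w = u₂
      · exact absurd (hv.trans hw.symm) he.ne
      · subst hv
        simp only [ι, dif_pos rfl, dif_neg hw]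
        simp [amalgam, SimpleGraph.fromRel_adj, he]
      · subst hw
        simp only [ι, dif_pos rfl, dif_neg hv]
        simp [amalgam, SimpleGraph.fromRel_adj, he.symm]
      · simp only [ι, dif_neg hv, dif_neg hw]
        simp [amalgam, SimpleGraph.fromRel_adj]
        exact ⟨fun hvw => he.ne (by simpa using hvw), Or.inl he⟩
  -- the amalgam has at least m₁ + m₂ edges
  have key : ∀ (z : V₂) (hz : z ≠ u₂) (e₁ : Sym2 V₁),
      (Sum.inr ⟨z, hz⟩ : V₁ ⊕ {v : V₂ // v ≠ u₂}) ∈ Sym2.map Sum.inl e₁ → False := by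
    intro z hz e₁ hmem
    rw [Sym2.mem_map] at hmem
    obtain ⟨a, -, ha⟩ := hmem
    exact Sum.inl_ne_inr ha
  have hdisjE : Disjoint (Sym2.map (Sum.inl : V₁ → V₁ ⊕ {v : V₂ // v ≠ u₂}) '' T₁.edgeSet)
      (Sym2.map ι '' T₂.edgeSet) := by
    rw [Set.disjoint_left]
    rintro e ⟨e₁, he₁, rfl⟩ ⟨e₂, he₂, heq⟩
    revert he₂ heq
    induction e₂ using Sym2.ind with
    | _ v w =>
      intro he₂ heq
      rw [SimpleGraph.mem_edgeSet] at he₂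
      by_cases hv : v = u₂
      · have hw : w ≠ u₂ := fun hw => he₂.ne (hv.trans hw.symm)
        have hmem : ι w ∈ Sym2.map ι s(v, w) := by
          rw [Sym2.map_pair_eq]; exact Sym2.mem_mk_right _ _
        rw [heq] at hmem
        rw [show ι w = Sum.inr ⟨w, hw⟩ from dif_neg hw] at hmem
        exact key w hw e₁ hmem
      · have hmem : ι v ∈ Sym2.map ι s(v, w) := by
          rw [Sym2.map_pair_eq]; exact Sym2.mem_mk_left _ _
        rw [heq] at hmem
        rw [show ι v = Sum.inr ⟨v, hv⟩ from dif_neg hv] at hmem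
        exact key v hv e₁ hmem
  have hcount : m₁ + m₂ ≤ (amalgam T₁ T₂ u₁ u₂).edgeSet.ncard := by
    have hA : (Sym2.map (Sum.inl : V₁ → V₁ ⊕ {v : V₂ // v ≠ u₂}) '' T₁.edgeSet).ncard = m₁ :=
      Set.ncard_image_of_injective _ (Sym2.map.injective Sum.inl_injective)
    have hB : (Sym2.map ι '' T₂.edgeSet).ncard = m₂ :=
      Set.ncard_image_of_injective _ (Sym2.map.injective hιinj)
    have hsub : (Sym2.map (Sum.inl : V₁ → V₁ ⊕ {v : V₂ // v ≠ u₂}) '' T₁.edgeSet) ∪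
        (Sym2.map ι '' T₂.edgeSet) ⊆ (amalgam T₁ T₂ u₁ u₂).edgeSet := by
      rintro e (⟨e₁, he, rfl⟩ | ⟨e₂, he, rfl⟩)
      exacts [hmapl _ he, hmapr _ he]
    calc m₁ + m₂
        = ((Sym2.map (Sum.inl : V₁ → V₁ ⊕ {v : V₂ // v ≠ u₂}) '' T₁.edgeSet) ∪
            (Sym2.map ι '' T₂.edgeSet)).ncard := by
          rw [Set.ncard_union_eq hdisjE (Set.toFinite _) (Set.toFinite _), hA, hB]
      _ ≤ (amalgam T₁ T₂ u₁ u₂).edgeSet.ncard := Set.ncard_le_ncard hsub (Set.toFinite _)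
  -- characterization of adjacency in the amalgam
  have hchar : ∀ a b, (amalgam T₁ T₂ u₁ u₂).Adj a b →
      (∃ x y, a = Sum.inl x ∧ b = Sum.inl y ∧ T₁.Adj x y) ∨
      (∃ (w : {v : V₂ // v ≠ u₂}), ((a = Sum.inl u₁ ∧ b = Sum.inr w) ∨
        (b = Sum.inl u₁ ∧ a = Sum.inr w)) ∧ T₂.Adj u₂ w.1) ∨
      (∃ v w, a = Sum.inr v ∧ b = Sum.inr w ∧ T₂.Adj v.1 w.1) := by
    intro a b h
    rcases a with x | v <;> rcases b with y | w <;>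
      simp [amalgam, SimpleGraph.fromRel_adj] at h
    · rcases h with ⟨-, h | h⟩
      · exact Or.inl ⟨x, y, rfl, rfl, h⟩
      · exact Or.inl ⟨x, y, rfl, rfl, h.symm⟩
    · exact Or.inr (Or.inl ⟨w, Or.inl ⟨by rw [h.1], rfl⟩, h.2⟩)
    · exact Or.inr (Or.inl ⟨v, Or.inr ⟨by rw [h.1], rfl⟩, h.2⟩)
    · rcases h with ⟨-, h | h⟩
      · exact Or.inr (Or.inr ⟨v, w, rfl, rfl, h⟩)
      · exact Or.inr (Or.inr ⟨v, w, rfl, rfl, h.symm⟩)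
  -- the bipartite cut
  have hgu : g (Sum.inl u₁) = d₁ := by rw [hgl]; simp [hu₁]
  have hbip : ∀ a b, (amalgam T₁ T₂ u₁ u₂).Adj a b →
      ((g a : ℤ) ≤ ((d₁ + d₂ : ℕ) : ℤ) ∧ ((d₁ + d₂ : ℕ) : ℤ) < (g b : ℤ)) ∨
      ((g b : ℤ) ≤ ((d₁ + d₂ : ℕ) : ℤ) ∧ ((d₁ + d₂ : ℕ) : ℤ) < (g a : ℤ)) := by
    intro a b hab
    rcases hchar a b hab with ⟨x, y, rfl, rfl, hxy⟩ | ⟨w, hor, hw⟩ | ⟨v, w, rfl, rfl, hvw⟩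
    · have hx := hle₁ x; have hy := hle₁ y
      rw [hgl, hgl]
      rcases hc₁ x y hxy with ⟨ha, hb⟩ | ⟨ha, hb⟩ <;> split_ifs <;> omega
    · have h2 := hc₂ u₂ w.1 hw
      rw [hu₂] at h2
      have hw1 := hb2pos w.1 w.2
      rcases hor with ⟨rfl, rfl⟩ | ⟨rfl, rfl⟩ <;> rw [hgu, hgr] <;> omega
    · rw [hgr, hgr]
      rcases hc₂ v.1 w.1 hvw with h | h <;> omega
  -- weights of T₂ are preserved
  have hW₂sub : edgeWt f₂ '' T₂.edgeSet ⊆ edgeWt g '' (amalgam T₁ T₂ u₁ u₂).edgeSet := by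
    rintro w ⟨e, he, rfl⟩
    refine ⟨Sym2.map ι e, hmapr e he, ?_⟩
    revert he
    induction e using Sym2.ind with
    | _ v w' =>
      intro he
      rw [Sym2.map_pair_eq]
      show ((g (ι v) : ℤ) - (g (ι w') : ℤ)).natAbs = ((f₂ v : ℤ) - (f₂ w' : ℤ)).natAbs
      rw [hgι, hgι]
      push_cast
      omega
  -- weights of T₁ are reflected past m₂
  have hrW₁sub : (fun w => m₁ + m₂ + 1 - w) '' (edgeWt f₁ '' T₁.edgeSet) ⊆
      edgeWt g '' (amalgam T₁ T₂ u₁ u₂).edgeSet := by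
    rintro w ⟨w', ⟨e, he, rfl⟩, rfl⟩
    refine ⟨Sym2.map Sum.inl e, hmapl e he, ?_⟩
    revert he
    induction e using Sym2.ind with
    | _ x y =>
      intro he
      rw [SimpleGraph.mem_edgeSet] at he
      rw [Sym2.map_pair_eq]
      show ((g (Sum.inl x) : ℤ) - (g (Sum.inl y) : ℤ)).natAbs =
        m₁ + m₂ + 1 - ((f₁ x : ℤ) - (f₁ y : ℤ)).natAbs
      rw [hgl, hgl]
      have hx := hle₁ x; have hy := hle₁ y
      rcases hc₁ x y he with ⟨ha, hb⟩ | ⟨ha, hb⟩ <;> split_ifs <;> omega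
  -- bounds on weights
  have hW₁bd : ∀ w ∈ edgeWt f₁ '' T₁.edgeSet, 1 ≤ w ∧ w ≤ m₁ := by
    rintro w ⟨e, he, rfl⟩
    revert he
    induction e using Sym2.ind with
    | _ x y =>
      intro he
      rw [SimpleGraph.mem_edgeSet] at he
      have h := hc₁ x y he
      have hx := hle₁ x; have hy := hle₁ y
      show 1 ≤ ((f₁ x : ℤ) - (f₁ y : ℤ)).natAbs ∧ ((f₁ x : ℤ) - (f₁ y : ℤ)).natAbs ≤ m₁
      omega
  have hW₂bd : ∀ w ∈ edgeWt f₂ '' T₂.edgeSet, 1 ≤ w ∧ w ≤ m₂ := by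
    rintro w ⟨e, he, rfl⟩
    revert he
    induction e using Sym2.ind with
    | _ x y =>
      intro he
      rw [SimpleGraph.mem_edgeSet] at he
      have h := hc₂ x y he
      have hx := hle₂ x; have hy := hle₂ y
      show 1 ≤ ((f₂ x : ℤ) - (f₂ y : ℤ)).natAbs ∧ ((f₂ x : ℤ) - (f₂ y : ℤ)).natAbs ≤ m₂
      omega
  -- assemble
  refine ⟨g, ⟨hginj, fun a => le_trans (hgle a) hcount, ⟨((d₁ + d₂ : ℕ) : ℤ), hbip⟩⟩, ?_⟩
  have hdisjW : Disjoint (edgeWt f₂ '' T₂.edgeSet)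
      ((fun w => m₁ + m₂ + 1 - w) '' (edgeWt f₁ '' T₁.edgeSet)) := by
    rw [Set.disjoint_left]
    rintro w hw ⟨w', hw', heq⟩
    have h1 := hW₂bd _ hw
    have h2 := hW₁bd _ hw'
    beta_reduce at heq
    omega
  have hrinj : Set.InjOn (fun w => m₁ + m₂ + 1 - w) (edgeWt f₁ '' T₁.edgeSet) := by
    intro a ha b hb h
    have h1 := hW₁bd _ ha
    have h2 := hW₁bd _ hb
    simp only [] at h
    omega
  have hfinWg : (edgeWt g '' (amalgam T₁ T₂ u₁ u₂).edgeSet).Finite :=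
    (Set.toFinite _).image _
  calc distinctWeightCount T₁ f₁ + distinctWeightCount T₂ f₂
      = ((fun w => m₁ + m₂ + 1 - w) '' (edgeWt f₁ '' T₁.edgeSet)).ncard +
        (edgeWt f₂ '' T₂.edgeSet).ncard := by
        rw [distinctWeightCount, distinctWeightCount, Set.ncard_image_of_injOn hrinj]
    _ = ((edgeWt f₂ '' T₂.edgeSet) ∪
          (fun w => m₁ + m₂ + 1 - w) '' (edgeWt f₁ '' T₁.edgeSet)).ncard := by
        rw [Set.ncard_union_eq hdisjW (Set.toFinite _ |>.image _)
          ((Set.toFinite _ |>.image _).image _)]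
        omega
    _ ≤ distinctWeightCount (amalgam T₁ T₂ u₁ u₂) g :=
        Set.ncard_le_ncard (Set.union_subset hW₂sub hrW₁sub) hfinWg
end
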